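/- With ω and m as in the Burns metric setup, and ρ = ∂∂̄ ln(|z|² + m/(1+|u|²)), one has ρ = (m/(|z|²(1+|u|²)+m)²)·[(1+|u|²) dz∧dz̄ + (((|z|²(1+|u|²)+m)(|u|²-1) - m|u|²)/(1+|u|²)²) du∧dū + ūz du∧dz̄ + uz̄ dz∧dū]. -/

import Mathlib

open Complex

/-- The Wirtinger derivative `∂f/∂z = ½(∂f/∂x - i ∂f/∂y)`. -/
noncomputable def wderiv (f : ℂ → ℂ) (p : ℂ) : ℂ :=
  (deriv (fun t : ℝ => f (p + t)) 0 - Complex.I * deriv (fun t : ℝ => f (p + t * Complex.I)) 0) / 2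

/-- The conjugate Wirtinger derivative `∂f/∂z̄ = ½(∂f/∂x + i ∂f/∂y)`. -/
noncomputable def wderivBar (f : ℂ → ℂ) (p : ℂ) : ℂ :=
  (deriv (fun t : ℝ => f (p + t)) 0 + Complex.I * deriv (fun t : ℝ => f (p + t * Complex.I)) 0) / 2

open Complex

lemma hasDerivAt_coe (x : ℝ) : HasDerivAt (fun t : ℝ => (t : ℂ)) 1 x := by
  simpa using (hasDerivAt_id x).ofReal_comp

lemma hasDerivAt_poly (A B : ℝ) : HasDerivAt (fun t : ℝ => A + B * t + t ^ 2) B 0 := by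
  have h := ((hasDerivAt_const (0:ℝ) A).add ((hasDerivAt_id (0:ℝ)).const_mul B)).add
    (hasDerivAt_pow 2 (0:ℝ))
  simpa [Pi.add_def] using h

lemma nsq_add_re (p : ℂ) (t : ℝ) : normSq (p + ↑t) = normSq p + 2 * p.re * t + t ^ 2 := by
  simp [Complex.normSq_apply]; ring

lemma nsq_add_I (p : ℂ) (t : ℝ) : normSq (p + ↑t * I) = normSq p + 2 * p.im * t + t ^ 2 := by
  simp [Complex.normSq_apply]; ring

lemma wderivBar_eq (f : ℂ → ℂ) (p : ℂ) {a b : ℂ}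
    (h1 : HasDerivAt (fun t : ℝ => f (p + ↑t)) a 0)
    (h2 : HasDerivAt (fun t : ℝ => f (p + ↑t * I)) b 0) :
    wderivBar f p = (a + I * b) / 2 := by
  unfold wderivBar; rw [h1.deriv, h2.deriv]

lemma wderiv_eq (f : ℂ → ℂ) (p : ℂ) {a b : ℂ}
    (h1 : HasDerivAt (fun t : ℝ => f (p + ↑t)) a 0)
    (h2 : HasDerivAt (fun t : ℝ => f (p + ↑t * I)) b 0) :
    wderiv f p = (a - I * b) / 2 := by
  unfold wderiv; rw [h1.deriv, h2.deriv]

lemma dirZ (c A B : ℝ) (hQ : 0 < A + c) :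
    HasDerivAt (fun t : ℝ => ((Real.log ((A + B * t + t ^ 2) + c) : ℝ) : ℂ))
      ((B / (A + c) : ℝ) : ℂ) 0 := by
  have hp : HasDerivAt (fun t : ℝ => (A + B * t + t ^ 2) + c) B 0 :=
    (hasDerivAt_poly A B).add_const c
  have hlog := hp.log (by simpa using hQ.ne')
  have := hlog.ofReal_comp
  convert this using 2
  simp

lemma innerZ (m : ℝ) (hm : 0 < m) (u z' : ℂ) :
    wderivBar (fun z'' => ((Real.log (normSq z'' + m / (1 + normSq u)) : ℝ) : ℂ)) z'
      = z' * (1 + (normSq u : ℂ)) / ((normSq z' * (1 + normSq u) + m : ℝ) : ℂ) := by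
  have h0 : (0:ℝ) ≤ normSq u := normSq_nonneg u
  have h1 : (0:ℝ) ≤ normSq z' := normSq_nonneg z'
  have hs : (0:ℝ) < 1 + normSq u := by linarith
  set c : ℝ := m / (1 + normSq u) with hc
  have hcpos : (0:ℝ) < c := by positivity
  have hQ : (0:ℝ) < normSq z' + c := by linarith
  have k1 : HasDerivAt (fun t : ℝ => ((Real.log (normSq (z' + ↑t) + c) : ℝ) : ℂ))
      ((2 * z'.re / (normSq z' + c) : ℝ) : ℂ) 0 := by
    have h := dirZ c (normSq z') (2 * z'.re) hQ
    have hfun : (fun t : ℝ => ((Real.log (normSq (z' + ↑t) + c) : ℝ) : ℂ))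
        = fun t : ℝ => ((Real.log ((normSq z' + 2 * z'.re * t + t ^ 2) + c) : ℝ) : ℂ) := by
      funext t; rw [nsq_add_re]
    rw [hfun]; exact h
  have k2 : HasDerivAt (fun t : ℝ => ((Real.log (normSq (z' + ↑t * I) + c) : ℝ) : ℂ))
      ((2 * z'.im / (normSq z' + c) : ℝ) : ℂ) 0 := by
    have h := dirZ c (normSq z') (2 * z'.im) hQ
    have hfun : (fun t : ℝ => ((Real.log (normSq (z' + ↑t * I) + c) : ℝ) : ℂ))
        = fun t : ℝ => ((Real.log ((normSq z' + 2 * z'.im * t + t ^ 2) + c) : ℝ) : ℂ) := by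
      funext t; rw [nsq_add_I]
    rw [hfun]; exact h
  rw [wderivBar_eq (fun z'' => ((Real.log (normSq z'' + m / (1 + normSq u)) : ℝ) : ℂ)) z' k1 k2]
  set Q : ℝ := normSq z' + c with hQdef
  set d : ℝ := normSq z' * (1 + normSq u) + m with hddef
  have hdpos : (0:ℝ) < d := by rw [hddef]; positivity
  have hrel : Q * (1 + normSq u) = d := by
    rw [hQdef, hddef, hc]; field_simp
  have hQC : ((Q:ℝ):ℂ) ≠ 0 := by exact_mod_cast hQ.ne'
  have hdC : ((d:ℝ):ℂ) ≠ 0 := by exact_mod_cast hdpos.ne'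
  have hrelC : ((Q:ℝ):ℂ) * (1 + (normSq u : ℂ)) = ((d:ℝ):ℂ) := by
    exact_mod_cast congrArg (fun r : ℝ => (r:ℂ)) hrel
  have hz' : ((z'.re:ℝ):ℂ) + ((z'.im:ℝ):ℂ) * I = z' := Complex.re_add_im z'
  rw [Complex.ofReal_div, Complex.ofReal_div, Complex.ofReal_mul, Complex.ofReal_mul]
  push_cast
  field_simp
  linear_combination ((d:ℝ):ℂ) * hz' - z' * hrelC

lemma dirU (nz mR A B : ℝ) (hA : 0 ≤ A) (hm : 0 < mR) (hnz : 0 ≤ nz) :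
    HasDerivAt (fun t : ℝ => ((Real.log (nz + mR / (1 + (A + B * t + t ^ 2))) : ℝ) : ℂ))
      ((-(mR * B) / ((1 + A) * (nz * (1 + A) + mR)) : ℝ) : ℂ) 0 := by
  have h1A : (0:ℝ) < 1 + A := by linarith
  have hp : HasDerivAt (fun t : ℝ => 1 + (A + B * t + t ^ 2)) B 0 :=
    (hasDerivAt_poly A B).const_add 1
  have hne : (fun t : ℝ => 1 + (A + B * t + t ^ 2)) 0 ≠ 0 := by
    simp only; norm_num; nlinarith
  have hdiv := (hasDerivAt_const (0:ℝ) mR).div hp hne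
  have hadd := hdiv.const_add nz
  have hlogne : nz + mR / (1 + (A + B * 0 + 0 ^ 2)) ≠ 0 := by
    have : 0 < mR / (1 + (A + B * 0 + 0 ^ 2)) := by norm_num; positivity
    nlinarith
  have hlog := hadd.log (by simpa using hlogne)
  have := hlog.ofReal_comp
  convert this using 2
  simp only [Pi.div_apply]
  norm_num
  have hpos : (0:ℝ) < nz * (1 + A) + mR := by nlinarith
  rw [div_div]
  rw [div_eq_div_iff (by positivity) (by nlinarith [mul_pos (pow_pos h1A 2) (by positivity : (0:ℝ) < nz + mR / (1+A)), sq_nonneg (1+A)])]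
  field_simp

lemma innerU (m : ℝ) (hm : 0 < m) (z u' : ℂ) :
    wderivBar (fun u'' => ((Real.log (normSq z + m / (1 + normSq u'')) : ℝ) : ℂ)) u'
      = -(m : ℂ) * u' /
        (((1 + normSq u' : ℝ) : ℂ) * ((normSq z * (1 + normSq u') + m : ℝ) : ℂ)) := by
  have h0 : (0:ℝ) ≤ normSq u' := normSq_nonneg u'
  have h1 : (0:ℝ) ≤ normSq z := normSq_nonneg z
  have k1 : HasDerivAt (fun t : ℝ => ((Real.log (normSq z + m / (1 + normSq (u' + ↑t))) : ℝ) : ℂ))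
      ((-(m * (2 * u'.re)) / ((1 + normSq u') * (normSq z * (1 + normSq u') + m)) : ℝ) : ℂ) 0 := by
    have h := dirU (normSq z) m (normSq u') (2 * u'.re) h0 hm h1
    have hfun : (fun t : ℝ => ((Real.log (normSq z + m / (1 + normSq (u' + ↑t))) : ℝ) : ℂ))
        = fun t : ℝ =>
          ((Real.log (normSq z + m / (1 + (normSq u' + 2 * u'.re * t + t ^ 2))) : ℝ) : ℂ) := by
      funext t; rw [nsq_add_re]
    rw [hfun]; exact h
  have k2 : HasDerivAt
      (fun t : ℝ => ((Real.log (normSq z + m / (1 + normSq (u' + ↑t * I))) : ℝ) : ℂ))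
      ((-(m * (2 * u'.im)) / ((1 + normSq u') * (normSq z * (1 + normSq u') + m)) : ℝ) : ℂ) 0 := by
    have h := dirU (normSq z) m (normSq u') (2 * u'.im) h0 hm h1
    have hfun : (fun t : ℝ => ((Real.log (normSq z + m / (1 + normSq (u' + ↑t * I))) : ℝ) : ℂ))
        = fun t : ℝ =>
          ((Real.log (normSq z + m / (1 + (normSq u' + 2 * u'.im * t + t ^ 2))) : ℝ) : ℂ) := by
      funext t; rw [nsq_add_I]
    rw [hfun]; exact h
  rw [wderivBar_eq (fun u'' => ((Real.log (normSq z + m / (1 + normSq u'')) : ℝ) : ℂ)) u' k1 k2]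
  set S : ℝ := 1 + normSq u' with hS
  set D : ℝ := normSq z * (1 + normSq u') + m with hD
  have hSpos : (0:ℝ) < S := by rw [hS]; positivity
  have hDpos : (0:ℝ) < D := by rw [hD]; positivity
  have hSC : ((S:ℝ):ℂ) ≠ 0 := by exact_mod_cast hSpos.ne'
  have hDC : ((D:ℝ):ℂ) ≠ 0 := by exact_mod_cast hDpos.ne'
  have hu' : ((u'.re:ℝ):ℂ) + ((u'.im:ℝ):ℂ) * I = u' := Complex.re_add_im u'
  rw [Complex.ofReal_div, Complex.ofReal_div]
  push_cast
  field_simp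
  linear_combination (-(m:ℂ)) * hu'

lemma dirC1 {ℓ : ℝ → ℂ} {p w : ℂ} {B s mR : ℝ} (hs : 0 < s) (hm : 0 < mR)
    (hℓ : HasDerivAt ℓ w 0) (hℓ0 : ℓ 0 = p)
    (hn : ∀ t, normSq (ℓ t) = normSq p + B * t + t ^ 2) :
    HasDerivAt (fun t : ℝ => ℓ t * ((s:ℝ):ℂ) / ((normSq (ℓ t) * s + mR : ℝ) : ℂ))
      ((w * ↑s * ↑(normSq p * s + mR) - p * ↑s * ↑(B * s)) /
        ((↑(normSq p * s + mR) : ℂ)) ^ 2) 0 := by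
  have hnn : (0:ℝ) ≤ normSq p := normSq_nonneg p
  have hN : HasDerivAt (fun t : ℝ => ℓ t * ((s:ℝ):ℂ)) (w * ↑s) 0 := hℓ.mul_const _
  have hDC : HasDerivAt (fun t : ℝ => (((normSq p + B * t + t ^ 2) * s + mR : ℝ) : ℂ))
      ↑(B * s) 0 := by
    have hD0 : HasDerivAt (fun t : ℝ => (normSq p + B * t + t ^ 2) * s + mR) (B * s) 0 :=
      ((hasDerivAt_poly _ B).mul_const s).add_const mR
    exact hD0.ofReal_comp
  have hne : (((normSq p + B * 0 + 0 ^ 2) * s + mR : ℝ) : ℂ) ≠ 0 := by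
    rw [Complex.ofReal_ne_zero]; norm_num; positivity
  have h := hN.div hDC hne
  have goalfun : (fun t : ℝ => ℓ t * ((s:ℝ):ℂ) / ((normSq (ℓ t) * s + mR : ℝ) : ℂ))
      = fun t : ℝ => (ℓ t * ((s:ℝ):ℂ)) / (((normSq p + B * t + t ^ 2) * s + mR : ℝ) : ℂ) := by
    funext t; rw [hn t]
  rw [goalfun]
  convert h using 1
  · rfl
  · rfl
  rw [hℓ0]
  norm_num

lemma dirC2 {ℓ : ℝ → ℂ} {p w : ℂ} {B nz mR : ℝ} (hnz : 0 ≤ nz) (hm : 0 < mR)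
    (hℓ : HasDerivAt ℓ w 0) (hℓ0 : ℓ 0 = p)
    (hn : ∀ t, normSq (ℓ t) = normSq p + B * t + t ^ 2) :
    HasDerivAt (fun t : ℝ => -(mR:ℂ) * ℓ t /
        (((1 + normSq (ℓ t) : ℝ) : ℂ) * ((nz * (1 + normSq (ℓ t)) + mR : ℝ) : ℂ)))
      ((-(mR:ℂ) * w * (↑(1 + normSq p) * ↑(nz * (1 + normSq p) + mR)) -
          -(mR:ℂ) * p * (↑B * ↑(nz * (1 + normSq p) + mR) + ↑(1 + normSq p) * ↑(nz * B))) /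
        ((↑(1 + normSq p) : ℂ) * (↑(nz * (1 + normSq p) + mR) : ℂ)) ^ 2) 0 := by
  have hnn : (0:ℝ) ≤ normSq p := normSq_nonneg p
  have hN : HasDerivAt (fun t : ℝ => -(mR:ℂ) * ℓ t) (-(mR:ℂ) * w) 0 := hℓ.const_mul _
  have g1 : HasDerivAt (fun t : ℝ => ((1 + (normSq p + B * t + t ^ 2) : ℝ) : ℂ)) ↑B 0 :=
    ((hasDerivAt_poly _ B).const_add 1).ofReal_comp
  have g2 : HasDerivAt (fun t : ℝ => ((nz * (1 + (normSq p + B * t + t ^ 2)) + mR : ℝ) : ℂ))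
      ↑(nz * B) 0 :=
    ((((hasDerivAt_poly _ B).const_add 1).const_mul nz).add_const mR).ofReal_comp
  have hD := g1.mul g2
  have hne : ((1 + (normSq p + B * 0 + 0 ^ 2) : ℝ) : ℂ) *
      ((nz * (1 + (normSq p + B * 0 + 0 ^ 2)) + mR : ℝ) : ℂ) ≠ 0 := by
    apply mul_ne_zero <;> rw [Complex.ofReal_ne_zero] <;> norm_num <;> positivity
  have h := hN.div hD hne
  have goalfun : (fun t : ℝ => -(mR:ℂ) * ℓ t /
        (((1 + normSq (ℓ t) : ℝ) : ℂ) * ((nz * (1 + normSq (ℓ t)) + mR : ℝ) : ℂ)))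
      = fun t : ℝ => (-(mR:ℂ) * ℓ t) /
          (((1 + (normSq p + B * t + t ^ 2) : ℝ) : ℂ) *
            ((nz * (1 + (normSq p + B * t + t ^ 2)) + mR : ℝ) : ℂ)) := by
    funext t; rw [hn t]
  rw [goalfun]
  convert h using 1
  · rfl
  · rfl
  rw [hℓ0]
  norm_num

lemma dirC3 {ℓ : ℝ → ℂ} {p w q : ℂ} {B nz mR : ℝ} (hnz : 0 ≤ nz) (hm : 0 < mR)
    (hℓ : HasDerivAt ℓ w 0) (hℓ0 : ℓ 0 = p)
    (hn : ∀ t, normSq (ℓ t) = normSq p + B * t + t ^ 2) :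
    HasDerivAt (fun t : ℝ => q * ((1 + normSq (ℓ t) : ℝ) : ℂ) /
        ((nz * (1 + normSq (ℓ t)) + mR : ℝ) : ℂ))
      ((q * ↑B * ↑(nz * (1 + normSq p) + mR) - q * ↑(1 + normSq p) * ↑(nz * B)) /
        ((↑(nz * (1 + normSq p) + mR) : ℂ)) ^ 2) 0 := by
  have hnn : (0:ℝ) ≤ normSq p := normSq_nonneg p
  have g1 : HasDerivAt (fun t : ℝ => q * ((1 + (normSq p + B * t + t ^ 2) : ℝ) : ℂ)) (q * ↑B) 0 :=
    (((hasDerivAt_poly _ B).const_add 1).ofReal_comp).const_mul q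
  have g2 : HasDerivAt (fun t : ℝ => ((nz * (1 + (normSq p + B * t + t ^ 2)) + mR : ℝ) : ℂ))
      ↑(nz * B) 0 :=
    ((((hasDerivAt_poly _ B).const_add 1).const_mul nz).add_const mR).ofReal_comp
  have hne : ((nz * (1 + (normSq p + B * 0 + 0 ^ 2)) + mR : ℝ) : ℂ) ≠ 0 := by
    rw [Complex.ofReal_ne_zero]; norm_num; positivity
  have h := g1.div g2 hne
  have goalfun : (fun t : ℝ => q * ((1 + normSq (ℓ t) : ℝ) : ℂ) /
        ((nz * (1 + normSq (ℓ t)) + mR : ℝ) : ℂ))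
      = fun t : ℝ => (q * ((1 + (normSq p + B * t + t ^ 2) : ℝ) : ℂ)) /
          ((nz * (1 + (normSq p + B * t + t ^ 2)) + mR : ℝ) : ℂ) := by
    funext t; rw [hn t]
  rw [goalfun]
  convert h using 1
  · rfl
  · rfl
  norm_num

lemma dirC4 {ℓ : ℝ → ℂ} {p w c : ℂ} {B s mR : ℝ} (hs : 0 < s) (hm : 0 < mR)
    (hℓ : HasDerivAt ℓ w 0) (hℓ0 : ℓ 0 = p)
    (hn : ∀ t, normSq (ℓ t) = normSq p + B * t + t ^ 2) :
    HasDerivAt (fun t : ℝ => c / (((s:ℝ):ℂ) * ((normSq (ℓ t) * s + mR : ℝ) : ℂ)))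
      ((0 * (((s:ℝ):ℂ) * ↑(normSq p * s + mR)) - c * (((s:ℝ):ℂ) * ↑(B * s))) /
        (((s:ℝ):ℂ) * (↑(normSq p * s + mR) : ℂ)) ^ 2) 0 := by
  have hnn : (0:ℝ) ≤ normSq p := normSq_nonneg p
  have g2 : HasDerivAt (fun t : ℝ => ((s:ℝ):ℂ) * (((normSq p + B * t + t ^ 2) * s + mR : ℝ) : ℂ))
      (((s:ℝ):ℂ) * ↑(B * s)) 0 :=
    ((((hasDerivAt_poly _ B).mul_const s).add_const mR).ofReal_comp).const_mul _
  have hne : ((s:ℝ):ℂ) * (((normSq p + B * 0 + 0 ^ 2) * s + mR : ℝ) : ℂ) ≠ 0 := by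
    apply mul_ne_zero <;> rw [Complex.ofReal_ne_zero]
    · exact hs.ne'
    · norm_num; positivity
  have h := (hasDerivAt_const (0:ℝ) c).div g2 hne
  have goalfun : (fun t : ℝ => c / (((s:ℝ):ℂ) * ((normSq (ℓ t) * s + mR : ℝ) : ℂ)))
      = fun t : ℝ => c / (((s:ℝ):ℂ) * (((normSq p + B * t + t ^ 2) * s + mR : ℝ) : ℂ)) := by
    funext t; rw [hn t]
  rw [goalfun]
  convert h using 1
  · rfl
  · rfl
  norm_num

/-- The Ricci form `ρ = ∂∂̄ ln(|z|² + m/(1+|u|²))` of the Burns metric equals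
`(m/(|z|²(1+|u|²)+m)²)·[(1+|u|²) dz∧dz̄ + (((|z|²(1+|u|²)+m)(|u|²-1)-m|u|²)/(1+|u|²)²) du∧dū
  + ūz du∧dz̄ + uz̄ dz∧dū]`, stated as equality of the four coefficients of the
(1,1)-form, each coefficient being a mixed Wirtinger derivative. -/
theorem stmt_15 (m : ℝ) (hm : 0 < m) (u z : ℂ) (hz : z ≠ 0) :
    let g : ℂ → ℂ → ℂ := fun u z =>
      (Real.log (Complex.normSq z + m / (1 + Complex.normSq u)) : ℂ)
    let X : ℂ := (Complex.normSq z : ℂ) * (1 + (Complex.normSq u : ℂ))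
    let F : ℂ := (m : ℂ) / (X + (m : ℂ)) ^ 2
    wderiv (fun z' => wderivBar (fun z'' => g u z'') z') z =
        F * (1 + (Complex.normSq u : ℂ)) ∧
    wderiv (fun u' => wderivBar (fun u'' => g u'' z) u') u =
        F * (((X + (m : ℂ)) * ((Complex.normSq u : ℂ) - 1) -
            (m : ℂ) * (Complex.normSq u : ℂ)) / (1 + (Complex.normSq u : ℂ)) ^ 2) ∧
    wderiv (fun u' => wderivBar (fun z' => g u' z') z) u = F * ((starRingEnd ℂ) u * z) ∧
    wderiv (fun z' => wderivBar (fun u' => g u' z') u) z = F * (u * (starRingEnd ℂ) z) := by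
  intro g X F
  have hun : (0:ℝ) ≤ normSq u := normSq_nonneg u
  have hzn : (0:ℝ) ≤ normSq z := normSq_nonneg z
  set S : ℝ := 1 + normSq u with hS
  have hSpos : (0:ℝ) < S := by rw [hS]; linarith
  set D : ℝ := normSq z * S + m with hD
  have hDpos : (0:ℝ) < D := by rw [hD]; positivity
  have hDC : ((D:ℝ):ℂ) ≠ 0 := Complex.ofReal_ne_zero.mpr hDpos.ne'
  have hSCne : ((S:ℝ):ℂ) ≠ 0 := Complex.ofReal_ne_zero.mpr hSpos.ne'
  have hXD : X + (m:ℂ) = ((D:ℝ):ℂ) := by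
    show (normSq z : ℂ) * (1 + (normSq u : ℂ)) + m = _
    rw [hD, hS]; push_cast; ring
  have hF : F = (m:ℂ) / ((D:ℝ):ℂ) ^ 2 := by
    show (m:ℂ) / (X + (m:ℂ)) ^ 2 = _
    rw [hXD]
  have hSC : (1 + (normSq u : ℂ)) = ((S:ℝ):ℂ) := by rw [hS]; push_cast; ring
  have hzz : z * ((z.re:ℂ) - (z.im:ℂ) * I) = ((normSq z : ℝ):ℂ) := by
    rw [show ((z.re:ℂ) - (z.im:ℂ) * I) = (starRingEnd ℂ) z by apply Complex.ext <;> simp]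
    exact Complex.mul_conj z
  have hDsplit : ((D:ℝ):ℂ) = ((normSq z : ℝ):ℂ) * ((S:ℝ):ℂ) + (m:ℂ) := by
    rw [hD]; push_cast; ring
  refine ⟨?_, ?_, ?_, ?_⟩
  · -- case 1
    have hin : (fun z' => wderivBar (fun z'' => g u z'') z')
        = fun z' => z' * ((S:ℝ):ℂ) / ((normSq z' * S + m : ℝ) : ℂ) := by
      funext z'
      rw [show wderivBar (fun z'' => g u z'') z' = wderivBar
        (fun z'' => ((Real.log (normSq z'' + m / (1 + normSq u)) : ℝ) : ℂ)) z' from rfl]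
      rw [innerZ m hm u z']
      rw [hSC]
    rw [hin]
    have hℓ1 : HasDerivAt (fun t : ℝ => z + (t:ℂ)) 1 0 := (hasDerivAt_coe 0).const_add z
    have hℓ2 : HasDerivAt (fun t : ℝ => z + (t:ℂ) * I) I 0 := by
      simpa using ((hasDerivAt_coe 0).mul_const I).const_add z
    have a1 := dirC1 (B := 2 * z.re) hSpos hm hℓ1 (by simp) (fun t => nsq_add_re z t)
    have b1 := dirC1 (B := 2 * z.im) hSpos hm hℓ2 (by simp) (fun t => nsq_add_I z t)
    rw [wderiv_eq (fun z' => z' * ((S:ℝ):ℂ) / ((normSq z' * S + m : ℝ) : ℂ)) z a1 b1]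
    rw [hF, hSC, ← hD]
    push_cast
    field_simp
    linear_combination (-((D:ℝ):ℂ)) * Complex.I_sq + (-(2 * ((S:ℝ):ℂ))) * hzz + 2 * hDsplit
  · -- case 2
    have hnu : u * ((u.re:ℂ) - (u.im:ℂ) * I) = ((normSq u : ℝ):ℂ) := by
      rw [show ((u.re:ℂ) - (u.im:ℂ) * I) = (starRingEnd ℂ) u by apply Complex.ext <;> simp]
      exact Complex.mul_conj u
    have hin : (fun u' => wderivBar (fun u'' => g u'' z) u')
        = fun u' => -(m:ℂ) * u' /
            (((1 + normSq u' : ℝ) : ℂ) * ((normSq z * (1 + normSq u') + m : ℝ) : ℂ)) := by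
      funext u'
      exact innerU m hm z u'
    rw [hin]
    have hℓ1u : HasDerivAt (fun t : ℝ => u + (t:ℂ)) 1 0 := (hasDerivAt_coe 0).const_add u
    have hℓ2u : HasDerivAt (fun t : ℝ => u + (t:ℂ) * I) I 0 := by
      simpa using ((hasDerivAt_coe 0).mul_const I).const_add u
    have a2 := dirC2 (B := 2 * u.re) (mR := m) hzn hm hℓ1u (by simp) (fun t => nsq_add_re u t)
    have b2 := dirC2 (B := 2 * u.im) (mR := m) hzn hm hℓ2u (by simp) (fun t => nsq_add_I u t)
    rw [wderiv_eq (fun u' => -(m:ℂ) * u' /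
        (((1 + normSq u' : ℝ) : ℂ) * ((normSq z * (1 + normSq u') + m : ℝ) : ℂ))) u a2 b2]
    rw [hF, hXD, hSC, ← hS, ← hD]
    push_cast
    field_simp
    linear_combination
      (2*(m:ℂ)*((S:ℝ):ℂ)*((normSq z:ℝ):ℂ) + 2*(m:ℂ)*((D:ℝ):ℂ)) * hnu
      + ((m:ℂ)*((S:ℝ):ℂ)*((D:ℝ):ℂ)) * Complex.I_sq
      + (2*(m:ℂ)*((D:ℝ):ℂ)) * hSC
      + (-(2*(m:ℂ)*((normSq u:ℝ):ℂ))) * hDsplit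
  · -- case 3
    have hin : (fun u' => wderivBar (fun z' => g u' z') z)
        = fun u' => z * ((1 + normSq u' : ℝ) : ℂ) /
            ((normSq z * (1 + normSq u') + m : ℝ) : ℂ) := by
      funext u'
      rw [show wderivBar (fun z' => g u' z') z = wderivBar
        (fun z'' => ((Real.log (normSq z'' + m / (1 + normSq u')) : ℝ) : ℂ)) z from rfl]
      rw [innerZ m hm u' z]
      push_cast
      ring
    rw [hin]
    have hℓ1u : HasDerivAt (fun t : ℝ => u + (t:ℂ)) 1 0 := (hasDerivAt_coe 0).const_add u
    have hℓ2u : HasDerivAt (fun t : ℝ => u + (t:ℂ) * I) I 0 := by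
      simpa using ((hasDerivAt_coe 0).mul_const I).const_add u
    have a3 := dirC3 (q := z) (B := 2 * u.re) (mR := m) hzn hm hℓ1u (by simp)
      (fun t => nsq_add_re u t)
    have b3 := dirC3 (q := z) (B := 2 * u.im) (mR := m) hzn hm hℓ2u (by simp)
      (fun t => nsq_add_I u t)
    rw [wderiv_eq (fun u' => z * ((1 + normSq u' : ℝ) : ℂ) /
        ((normSq z * (1 + normSq u') + m : ℝ) : ℂ)) u a3 b3]
    rw [hF, show (starRingEnd ℂ) u = ((u.re:ℂ) - (u.im:ℂ) * I) from (by apply Complex.ext <;> simp),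
      ← hS, ← hD]
    push_cast
    field_simp
    linear_combination (((u.re:ℂ) - (u.im:ℂ)*I)) * hDsplit
  · -- case 4
    have hin : (fun z' => wderivBar (fun u' => g u' z') u)
        = fun z' => -(m:ℂ) * u / (((S:ℝ):ℂ) * ((normSq z' * S + m : ℝ) : ℂ)) := by
      funext z'
      rw [show wderivBar (fun u' => g u' z') u = wderivBar
        (fun u'' => ((Real.log (normSq z' + m / (1 + normSq u'')) : ℝ) : ℂ)) u from rfl]
      rw [innerU m hm z' u]
    rw [hin]
    have hℓ1 : HasDerivAt (fun t : ℝ => z + (t:ℂ)) 1 0 := (hasDerivAt_coe 0).const_add z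
    have hℓ2 : HasDerivAt (fun t : ℝ => z + (t:ℂ) * I) I 0 := by
      simpa using ((hasDerivAt_coe 0).mul_const I).const_add z
    have a4 := dirC4 (c := -(m:ℂ) * u) (B := 2 * z.re) hSpos hm hℓ1 (by simp)
      (fun t => nsq_add_re z t)
    have b4 := dirC4 (c := -(m:ℂ) * u) (B := 2 * z.im) hSpos hm hℓ2 (by simp)
      (fun t => nsq_add_I z t)
    rw [wderiv_eq (fun z' => -(m:ℂ) * u /
        (((S:ℝ):ℂ) * ((normSq z' * S + m : ℝ) : ℂ))) z a4 b4]
    rw [hF, show (starRingEnd ℂ) z = ((z.re:ℂ) - (z.im:ℂ) * I) from (by apply Complex.ext <;> simp),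
      ← hD]
    push_cast
    field_simp
    ring
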